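/- If τ > 1 and {I_α}_{α∈A} is a finite family of bounded intervals on ℝ, then |⋃_α τI_α| ≤ τ · |⋃_α I_α|. -/

import Mathlib

open MeasureTheory

/-- `dilate τ a b` is the interval with the same center as `[a,b]` and `τ` times its length. -/
def dilate (τ a b : ℝ) : Set ℝ :=
  Set.Icc ((a + b) / 2 - τ * (b - a) / 2) ((a + b) / 2 + τ * (b - a) / 2)

lemma dilate_mono {τ a b c d : ℝ} (hτ : 1 ≤ τ) (hca : c ≤ a) (hbd : b ≤ d) :
    dilate τ a b ⊆ dilate τ c d := by
  unfold dilate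
  apply Set.Icc_subset_Icc <;> nlinarith

lemma volume_dilate {τ a b : ℝ} (hτ : 0 ≤ τ) (hab : a ≤ b) :
    volume (dilate τ a b) = ENNReal.ofReal τ * ENNReal.ofReal (b - a) := by
  unfold dilate
  rw [Real.volume_Icc, ← ENNReal.ofReal_mul hτ]
  ring_nf

lemma list_biUnion_cons {α : Type} (q : α × α) (l : List (α × α)) (f : α × α → Set ℝ) :
    (⋃ p ∈ (q :: l), f p) = f q ∪ ⋃ p ∈ l, f p := by
  ext x
  simp only [List.mem_cons, Set.mem_iUnion, Set.mem_union]
  constructor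
  · rintro ⟨p, (rfl | hp), hx⟩
    · exact Or.inl hx
    · exact Or.inr ⟨p, hp, hx⟩
  · rintro (hx | ⟨p, hp, hx⟩)
    · exact ⟨q, Or.inl rfl, hx⟩
    · exact ⟨p, Or.inr hp, hx⟩

lemma list_biUnion_erase {α : Type} [BEq (α × α)] [LawfulBEq (α × α)] {q : α × α} {l : List (α × α)}
    (hq : q ∈ l) (f : α × α → Set ℝ) :
    (⋃ p ∈ l, f p) = f q ∪ ⋃ p ∈ l.erase q, f p := by
  classical
  have hmem : ∀ p, p ∈ l ↔ p = q ∨ p ∈ l.erase q := by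
    intro p
    constructor
    · intro hp
      by_cases h : p = q
      · exact Or.inl h
      · exact Or.inr ((List.mem_erase_of_ne h).mpr hp)
    · rintro (rfl | hp)
      · exact hq
      · exact List.mem_of_mem_erase hp
  ext x
  simp only [Set.mem_iUnion, Set.mem_union]
  constructor
  · rintro ⟨p, hp, hx⟩
    rcases (hmem p).mp hp with rfl | hp'
    · exact Or.inl hx
    · exact Or.inr ⟨p, hp', hx⟩
  · rintro (hx | ⟨p, hp, hx⟩)
    · exact ⟨q, hq, hx⟩
    · exact ⟨p, (hmem p).mpr (Or.inr hp), hx⟩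

lemma aux_list (τ : ℝ) (hτ : 1 < τ) : ∀ n (L : List (ℝ × ℝ)), L.length = n →
    (∀ p ∈ L, p.1 ≤ p.2) →
    volume (⋃ p ∈ L, dilate τ p.1 p.2) ≤
      ENNReal.ofReal τ * volume (⋃ p ∈ L, Set.Icc p.1 p.2) := by
  intro n
  induction n using Nat.strong_induction_on with
  | _ n ih =>
    intro L hlen hL
    match L with
    | [] => simp
    | hd :: tl =>
      by_cases hdisj : ∀ q ∈ tl, Disjoint (Set.Icc hd.1 hd.2) (Set.Icc q.1 q.2)
      · -- disjoint case
        have hmeasT : MeasurableSet (⋃ p ∈ tl, Set.Icc p.1 p.2) :=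
          Set.Finite.measurableSet_biUnion tl.finite_toSet (fun p _ => measurableSet_Icc)
        have hdis : Disjoint (Set.Icc hd.1 hd.2) (⋃ p ∈ tl, Set.Icc p.1 p.2) := by
          rw [Set.disjoint_iUnion₂_right]; exact hdisj
        rw [list_biUnion_cons, list_biUnion_cons,
          measure_union hdis hmeasT]
        have h1 : volume (dilate τ hd.1 hd.2 ∪ ⋃ p ∈ tl, dilate τ p.1 p.2) ≤
            volume (dilate τ hd.1 hd.2) + volume (⋃ p ∈ tl, dilate τ p.1 p.2) :=
          measure_union_le _ _
        refine h1.trans ?_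
        have hn : n = tl.length + 1 := by simpa using hlen.symm
        have h2 := ih tl.length (by omega) tl rfl (fun p hp => hL p (List.mem_cons_of_mem _ hp))
        rw [volume_dilate (by linarith) (hL hd List.mem_cons_self), Real.volume_Icc,
          mul_add]
        exact add_le_add le_rfl h2
      · -- merge case
        push_neg at hdisj
        obtain ⟨q, hqtl, hnd⟩ := hdisj
        rw [Set.not_disjoint_iff] at hnd
        obtain ⟨x, hx1, hx2⟩ := hnd
        have hhd : hd.1 ≤ hd.2 := hL hd List.mem_cons_self
        have hq : q.1 ≤ q.2 := hL q (List.mem_cons_of_mem _ hqtl)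
        set m : ℝ × ℝ := (min hd.1 q.1, max hd.2 q.2) with hm
        set L' : List (ℝ × ℝ) := m :: tl.erase q with hL'
        have hn : n = tl.length + 1 := by simpa using hlen.symm
        have hlen' : L'.length < n := by
          have := List.length_erase_of_mem hqtl
          have htl : 1 ≤ tl.length := List.length_pos_iff.mpr (List.ne_nil_of_mem hqtl)
          simp only [hL', List.length_cons, this]
          omega
        have hL'mem : ∀ p ∈ L', p.1 ≤ p.2 := by
          intro p hp
          rcases List.mem_cons.mp hp with h | h
          · subst h; exact le_trans (min_le_left _ _) (le_trans hhd (le_max_left _ _))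
          · exact hL p (List.mem_cons_of_mem _ (List.mem_of_mem_erase h))
        have hIccEq : (⋃ p ∈ (hd :: tl), Set.Icc p.1 p.2) = ⋃ p ∈ L', Set.Icc p.1 p.2 := by
          rw [list_biUnion_cons, list_biUnion_erase hqtl, hL', list_biUnion_cons,
            ← Set.union_assoc, Set.Icc_union_Icc' (hx2.1.trans hx1.2) (hx1.1.trans hx2.2)]
        have hDilSub : (⋃ p ∈ (hd :: tl), dilate τ p.1 p.2) ⊆
            ⋃ p ∈ L', dilate τ p.1 p.2 := by
          rw [list_biUnion_cons, list_biUnion_erase hqtl (fun p => dilate τ p.1 p.2), hL',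
            list_biUnion_cons, ← Set.union_assoc]
          intro y hy
          simp only [Set.mem_union] at hy ⊢
          rcases hy with (hy | hy) | hy
          · exact Or.inl (dilate_mono hτ.le (min_le_left _ _) (le_max_left _ _) hy)
          · exact Or.inl (dilate_mono hτ.le (min_le_right _ _) (le_max_right _ _) hy)
          · exact Or.inr hy
        calc volume (⋃ p ∈ (hd :: tl), dilate τ p.1 p.2)
            ≤ volume (⋃ p ∈ L', dilate τ p.1 p.2) := measure_mono hDilSub
          _ ≤ ENNReal.ofReal τ * volume (⋃ p ∈ L', Set.Icc p.1 p.2) :=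
              ih L'.length hlen' L' rfl hL'mem
          _ = ENNReal.ofReal τ * volume (⋃ p ∈ (hd :: tl), Set.Icc p.1 p.2) := by
              rw [hIccEq]

/-- If `τ > 1` then `|⋃ τI_α| ≤ τ ⋅ |⋃ I_α|` for any finite family of bounded intervals. -/
theorem stmt_2 {ι : Type} (A : Finset ι) (a b : ι → ℝ) (hab : ∀ α ∈ A, a α ≤ b α)
    (τ : ℝ) (hτ : 1 < τ) :
    volume (⋃ α ∈ A, dilate τ (a α) (b α)) ≤
      ENNReal.ofReal τ * volume (⋃ α ∈ A, Set.Icc (a α) (b α)) := by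
  classical
  set L : List (ℝ × ℝ) := A.toList.map (fun α => (a α, b α)) with hLdef
  have hUnion1 : (⋃ α ∈ A, dilate τ (a α) (b α)) = ⋃ p ∈ L, dilate τ p.1 p.2 := by
    ext x
    simp only [Set.mem_iUnion, hLdef, List.mem_map, Finset.mem_toList]
    constructor
    · rintro ⟨α, hα, hx⟩; exact ⟨(a α, b α), ⟨α, hα, rfl⟩, hx⟩
    · rintro ⟨p, ⟨α, hα, rfl⟩, hx⟩; exact ⟨α, hα, hx⟩
  have hUnion2 : (⋃ α ∈ A, Set.Icc (a α) (b α)) = ⋃ p ∈ L, Set.Icc p.1 p.2 := by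
    ext x
    simp only [Set.mem_iUnion, hLdef, List.mem_map, Finset.mem_toList]
    constructor
    · rintro ⟨α, hα, hx⟩; exact ⟨(a α, b α), ⟨α, hα, rfl⟩, hx⟩
    · rintro ⟨p, ⟨α, hα, rfl⟩, hx⟩; exact ⟨α, hα, hx⟩
  rw [hUnion1, hUnion2]
  apply aux_list τ hτ L.length L rfl
  rintro p hp
  simp only [hLdef, List.mem_map, Finset.mem_toList] at hp
  obtain ⟨α, hα, rfl⟩ := hp
  exact hab α hα
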